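/- Let 1 < p < 2, T > 0, and let f, g : [0,T] → ℝ be measurable functions with ∫₀ᵀ |f(t)|^p dt < ∞ and ∫₀ᵀ |g(t)|^p dt < ∞. Then ∫₀ᵀ |f(t) − g(t)|^p dt ≤ 2^{(p−1)(2−p)/2}·(‖f‖_{L^p}^p + ‖g‖_{L^p}^p)^{(2−p)/2}·(∫₀ᵀ (f(t) − g(t))² / (|f(t)| + |g(t)|)^{2−p} dt)^{p/2}, where the integrand (f(t) − g(t))² / (|f(t)| + |g(t)|)^{2−p} is interpreted as 0 at points where f(t) = g(t) = 0. -/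

import Mathlib

open MeasureTheory intervalIntegral

/-- `(a+b)^p ≤ 2^(p-1) * (a^p + b^p)` for nonneg reals and `1 ≤ p`. -/
lemma stmt8_add_rpow_le (a b : ℝ) {p : ℝ} (ha : 0 ≤ a) (hb : 0 ≤ b) (hp : 1 ≤ p) :
    (a + b) ^ p ≤ 2 ^ (p - 1) * (a ^ p + b ^ p) := by
  lift a to NNReal using ha
  lift b to NNReal using hb
  have h := NNReal.rpow_add_le_mul_rpow_add_rpow a b hp
  have := (NNReal.coe_le_coe).mpr h
  push_cast at this
  convert this using 3 <;> norm_num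

/-- For `1 < p < 2`, `T > 0` and measurable `f, g` with
`∫₀ᵀ |f|^p < ∞`, `∫₀ᵀ |g|^p < ∞`, one has
`∫₀ᵀ |f − g|^p ≤ 2^{(p−1)(2−p)/2}·(‖f‖_{L^p}^p + ‖g‖_{L^p}^p)^{(2−p)/2}
·(∫₀ᵀ (f − g)²/(|f| + |g|)^{2−p})^{p/2}`, the integrand
`(f(t) − g(t))²/(|f(t)| + |g(t)|)^{2−p}` being interpreted as `0` where
`f(t) = g(t) = 0` (which is Lean's convention, as `0/0 = 0`). -/
theorem stmt_8 (p T : ℝ) (hp1 : 1 < p) (hp2 : p < 2) (hT : 0 < T)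
    (f g : ℝ → ℝ) (hf : Measurable f) (hg : Measurable g)
    (hfp : IntervalIntegrable (fun t => |f t| ^ p) volume 0 T)
    (hgp : IntervalIntegrable (fun t => |g t| ^ p) volume 0 T) :
    (∫ t in (0 : ℝ)..T, |f t - g t| ^ p) ≤
      2 ^ ((p - 1) * (2 - p) / 2) *
        ((∫ t in (0 : ℝ)..T, |f t| ^ p) + ∫ t in (0 : ℝ)..T, |g t| ^ p)
          ^ ((2 - p) / 2) *
        (∫ t in (0 : ℝ)..T,
            (f t - g t) ^ 2 / (|f t| + |g t|) ^ (2 - p)) ^ (p / 2) := by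
  have hp0 : (0:ℝ) < p := by linarith
  have h2p : (0:ℝ) < 2 - p := by linarith
  -- switch to set integrals over Ioc
  rw [intervalIntegral.integral_of_le hT.le, intervalIntegral.integral_of_le hT.le,
    intervalIntegral.integral_of_le hT.le, intervalIntegral.integral_of_le hT.le]
  set μ : Measure ℝ := volume.restrict (Set.Ioc 0 T) with hμ
  set S : ℝ → ℝ := fun t => |f t| + |g t| with hSdef
  set A : ℝ → ℝ := fun t => ((f t - g t) ^ 2 / S t ^ (2 - p)) ^ (p / 2) with hAdef
  set B : ℝ → ℝ := fun t => (S t ^ (2 - p)) ^ (p / 2) with hBdef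
  have hSnn : ∀ t, 0 ≤ S t := fun t => by positivity
  have hAnn : ∀ t, 0 ≤ A t := fun t =>
    Real.rpow_nonneg (div_nonneg (sq_nonneg _) (Real.rpow_nonneg (hSnn t) _)) _
  have hBnn : ∀ t, 0 ≤ B t := fun t => Real.rpow_nonneg (Real.rpow_nonneg (hSnn t) _) _
  -- pointwise facts
  have fact1 : ∀ t, A t * B t = |f t - g t| ^ p := by
    intro t
    by_cases hs : S t = 0
    · have hf0 : |f t| = 0 ∧ |g t| = 0 :=
        (add_eq_zero_iff_of_nonneg (abs_nonneg _) (abs_nonneg _)).mp hs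
      have hft : f t = 0 := abs_eq_zero.mp hf0.1
      have hgt : g t = 0 := abs_eq_zero.mp hf0.2
      simp [hAdef, hBdef, hs, hft, hgt, Real.zero_rpow (ne_of_gt h2p),
        Real.zero_rpow (ne_of_gt hp0), Real.zero_rpow (ne_of_gt (by positivity : (0:ℝ) < p/2))]
    · have hspos : 0 < S t := lt_of_le_of_ne (hSnn t) (Ne.symm hs)
      have hD : (0:ℝ) < S t ^ (2 - p) := Real.rpow_pos_of_pos hspos _
      have h1 : A t * B t = ((f t - g t) ^ 2 / S t ^ (2 - p) * S t ^ (2 - p)) ^ (p / 2) :=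
        (Real.mul_rpow (div_nonneg (sq_nonneg _) hD.le) hD.le).symm
      rw [h1, div_mul_cancel₀ _ hD.ne']
      have h2 : (f t - g t) ^ 2 = |f t - g t| ^ (2:ℝ) := by
        rw [← sq_abs, ← Real.rpow_natCast |f t - g t| 2]; norm_num
      rw [h2, ← Real.rpow_mul (abs_nonneg _)]
      congr 1
      push_cast
      ring
  have fact2 : ∀ t, A t ^ (2 / p) = (f t - g t) ^ 2 / S t ^ (2 - p) := by
    intro t
    rw [hAdef, ← Real.rpow_mul (div_nonneg (sq_nonneg _) (Real.rpow_nonneg (hSnn t) _))]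
    rw [show p / 2 * (2 / p) = 1 by field_simp, Real.rpow_one]
  have fact3 : ∀ t, B t ^ (2 / (2 - p)) = S t ^ p := by
    intro t
    rw [hBdef, ← Real.rpow_mul (Real.rpow_nonneg (hSnn t) _),
      ← Real.rpow_mul (hSnn t)]
    congr 1
    field_simp
  have fact4 : ∀ t, (f t - g t) ^ 2 / S t ^ (2 - p) ≤ S t ^ p := by
    intro t
    by_cases hs : S t = 0
    · rw [hs, Real.zero_rpow (ne_of_gt h2p), div_zero, Real.zero_rpow (ne_of_gt hp0)]
    · have hspos : 0 < S t := lt_of_le_of_ne (hSnn t) (Ne.symm hs)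
      have hD : (0:ℝ) < S t ^ (2 - p) := Real.rpow_pos_of_pos hspos _
      have hx : (f t - g t) ^ 2 ≤ S t ^ 2 := by
        have h1 : |f t - g t| ≤ S t := by
          simpa [sub_eq_add_neg, abs_neg] using abs_add_le (f t) (-(g t))
        calc (f t - g t) ^ 2 = |f t - g t| ^ 2 := (sq_abs _).symm
          _ ≤ S t ^ 2 := pow_le_pow_left₀ (abs_nonneg _) h1 2
      calc (f t - g t) ^ 2 / S t ^ (2 - p) ≤ S t ^ 2 / S t ^ (2 - p) := by gcongr
        _ = S t ^ p := by
            rw [← Real.rpow_natCast (S t) 2, ← Real.rpow_sub hspos]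
            norm_num
  have fact5 : ∀ t, S t ^ p ≤ 2 ^ (p - 1) * (|f t| ^ p + |g t| ^ p) := fun t =>
    stmt8_add_rpow_le _ _ (abs_nonneg _) (abs_nonneg _) hp1.le
  -- measurability
  have hSm : Measurable S := hf.abs.add hg.abs
  have hDm : Measurable fun t => S t ^ (2 - p) :=
    (Real.continuous_rpow_const h2p.le).measurable.comp hSm
  have hxm : Measurable fun t => (f t - g t) ^ 2 / S t ^ (2 - p) :=
    ((hf.sub hg).pow_const 2).div hDm
  have hAm : Measurable A :=
    (Real.continuous_rpow_const (by positivity : (0:ℝ) ≤ p / 2)).measurable.comp hxm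
  have hBm : Measurable B :=
    (Real.continuous_rpow_const (by positivity : (0:ℝ) ≤ p / 2)).measurable.comp hDm
  -- integrability
  have hfpI : Integrable (fun t => |f t| ^ p) μ :=
    (intervalIntegrable_iff_integrableOn_Ioc_of_le hT.le).mp hfp
  have hgpI : Integrable (fun t => |g t| ^ p) μ :=
    (intervalIntegrable_iff_integrableOn_Ioc_of_le hT.le).mp hgp
  have hsum : Integrable (fun t => 2 ^ (p - 1) * (|f t| ^ p + |g t| ^ p)) μ :=
    (hfpI.add hgpI).const_mul _
  have hSpI : Integrable (fun t => S t ^ p) μ := by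
    refine hsum.mono' ((Real.continuous_rpow_const hp0.le).measurable.comp hSm).aestronglyMeasurable ?_
    filter_upwards with t
    rw [Real.norm_eq_abs, abs_of_nonneg (Real.rpow_nonneg (hSnn t) _)]
    exact fact5 t
  have hxI : Integrable (fun t => (f t - g t) ^ 2 / S t ^ (2 - p)) μ := by
    refine hSpI.mono' hxm.aestronglyMeasurable ?_
    filter_upwards with t
    rw [Real.norm_eq_abs,
      abs_of_nonneg (div_nonneg (sq_nonneg _) (Real.rpow_nonneg (hSnn t) _))]
    exact fact4 t
  -- Memℒp
  have hq1 : (0:ℝ) < 2 / p := by positivity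
  have hq2 : (0:ℝ) < 2 / (2 - p) := by positivity
  have hne1 : ENNReal.ofReal (2 / p) ≠ 0 := by
    simp [ENNReal.ofReal_eq_zero, not_le, hq1]
  have hne2 : ENNReal.ofReal (2 / (2 - p)) ≠ 0 := by
    simp [ENNReal.ofReal_eq_zero, not_le, hq2]
  have hMA : MemLp A (ENNReal.ofReal (2 / p)) μ := by
    refine (memLp_norm_rpow_iff hAm.aestronglyMeasurable hne1 ENNReal.ofReal_ne_top).mp ?_
    rw [ENNReal.div_self hne1 ENNReal.ofReal_ne_top, memLp_one_iff_integrable]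
    have e : (fun t => ‖A t‖ ^ (ENNReal.ofReal (2 / p)).toReal)
        = fun t => (f t - g t) ^ 2 / S t ^ (2 - p) := by
      funext t
      rw [ENNReal.toReal_ofReal hq1.le, Real.norm_eq_abs, abs_of_nonneg (hAnn t), fact2]
    rw [e]; exact hxI
  have hMB : MemLp B (ENNReal.ofReal (2 / (2 - p))) μ := by
    refine (memLp_norm_rpow_iff hBm.aestronglyMeasurable hne2 ENNReal.ofReal_ne_top).mp ?_
    rw [ENNReal.div_self hne2 ENNReal.ofReal_ne_top, memLp_one_iff_integrable]
    have e : (fun t => ‖B t‖ ^ (ENNReal.ofReal (2 / (2 - p))).toReal)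
        = fun t => S t ^ p := by
      funext t
      rw [ENNReal.toReal_ofReal hq2.le, Real.norm_eq_abs, abs_of_nonneg (hBnn t), fact3]
    rw [e]; exact hSpI
  -- Hölder
  have hpq : Real.HolderConjugate (2 / p) (2 / (2 - p)) := by
    rw [Real.holderConjugate_iff]
    constructor
    · rw [lt_div_iff₀ hp0]; linarith
    · rw [inv_div, inv_div]; field_simp; ring
  have H := MeasureTheory.integral_mul_norm_le_Lp_mul_Lq (μ := μ) hpq hMA hMB
  have e1 : (fun a => ‖A a‖ * ‖B a‖) = fun a => |f a - g a| ^ p := by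
    funext t
    rw [Real.norm_eq_abs, Real.norm_eq_abs, abs_of_nonneg (hAnn t), abs_of_nonneg (hBnn t),
      fact1]
  have e2 : (fun a => ‖A a‖ ^ (2 / p)) = fun t => (f t - g t) ^ 2 / S t ^ (2 - p) := by
    funext t
    rw [Real.norm_eq_abs, abs_of_nonneg (hAnn t), fact2]
  have e3 : (fun a => ‖B a‖ ^ (2 / (2 - p))) = fun t => S t ^ p := by
    funext t
    rw [Real.norm_eq_abs, abs_of_nonneg (hBnn t), fact3]
  rw [e1, e2, e3, one_div_div, one_div_div] at H
  -- bound the S^p integral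
  have hJ : (∫ t, S t ^ p ∂μ) ≤ 2 ^ (p - 1) * ((∫ t, |f t| ^ p ∂μ) + ∫ t, |g t| ^ p ∂μ) := by
    calc (∫ t, S t ^ p ∂μ) ≤ ∫ t, 2 ^ (p - 1) * (|f t| ^ p + |g t| ^ p) ∂μ :=
          integral_mono hSpI hsum fun t => fact5 t
      _ = _ := by rw [MeasureTheory.integral_const_mul, MeasureTheory.integral_add hfpI hgpI]
  have hInn : 0 ≤ ∫ t, (f t - g t) ^ 2 / S t ^ (2 - p) ∂μ :=
    integral_nonneg fun t => div_nonneg (sq_nonneg _) (Real.rpow_nonneg (hSnn t) _)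
  have hJnn : 0 ≤ ∫ t, S t ^ p ∂μ := integral_nonneg fun t => Real.rpow_nonneg (hSnn t) _
  have hKnn : 0 ≤ (∫ t, |f t| ^ p ∂μ) + ∫ t, |g t| ^ p ∂μ :=
    add_nonneg (integral_nonneg fun t => Real.rpow_nonneg (abs_nonneg _) _)
      (integral_nonneg fun t => Real.rpow_nonneg (abs_nonneg _) _)
  have hJ2 : (∫ t, S t ^ p ∂μ) ^ ((2 - p) / 2) ≤
      2 ^ ((p - 1) * (2 - p) / 2) *
        ((∫ t, |f t| ^ p ∂μ) + ∫ t, |g t| ^ p ∂μ) ^ ((2 - p) / 2) := by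
    have h := Real.rpow_le_rpow hJnn hJ (by linarith : (0:ℝ) ≤ (2 - p) / 2)
    rwa [Real.mul_rpow (by positivity) hKnn,
      ← Real.rpow_mul (by norm_num : (0:ℝ) ≤ 2), ← mul_div_assoc] at h
  calc (∫ t, |f t - g t| ^ p ∂μ) ≤
        (∫ t, (f t - g t) ^ 2 / S t ^ (2 - p) ∂μ) ^ (p / 2) *
          (∫ t, S t ^ p ∂μ) ^ ((2 - p) / 2) := H
    _ ≤ (∫ t, (f t - g t) ^ 2 / S t ^ (2 - p) ∂μ) ^ (p / 2) *
          (2 ^ ((p - 1) * (2 - p) / 2) *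
            ((∫ t, |f t| ^ p ∂μ) + ∫ t, |g t| ^ p ∂μ) ^ ((2 - p) / 2)) :=
        mul_le_mul_of_nonneg_left hJ2 (Real.rpow_nonneg hInn _)
    _ = _ := by ring
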